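/- Let g be the 4-dimensional real Lie algebra with orthonormal basis {e₀,e₁,e₂,e₃} where u = span{e₁,e₂,e₃} is an ideal isomorphic to sl(2,ℝ) with [e₂,e₃] = λ₁e₁, [e₃,e₁] = λ₂e₂, [e₁,e₂] = λ₃e₃, λ₁λ₂λ₃ ≠ 0, λ₁+λ₂+λ₃ = 0, and ad_{e₀} acts on u as a self-adjoint derivation. Then ad_{e₀} = 0 on u, so g is the direct sum ℝ ⊕ sl(2,ℝ) and is unimodular. -/

import Mathlib

/-- In a 4-dimensional real metric Lie algebra with orthonormal basis
`{e₀,e₁,e₂,e₃}` where `u = span{e₁,e₂,e₃}` is an ideal isomorphic to `sl(2,ℝ)` (brackets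
`[e₂,e₃] = λ₁e₁`, `[e₃,e₁] = λ₂e₂`, `[e₁,e₂] = λ₃e₃`, `λ₁λ₂λ₃ ≠ 0`, `λ₁+λ₂+λ₃ = 0`) and
`ad_{e₀}` acts on `u` as a self-adjoint derivation, one has `ad_{e₀} = 0` on `u`, and the
Lie algebra is unimodular (a direct sum `ℝ ⊕ sl(2,ℝ)`). -/
theorem sl2_extension_is_trivial {L : Type*} [LieRing L] [LieAlgebra ℝ L]
    [FiniteDimensional ℝ L]
    (ip : L →ₗ[ℝ] L →ₗ[ℝ] ℝ)
    (hsymm : ∀ x y : L, ip x y = ip y x)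
    (hpos : ∀ x : L, x ≠ 0 → 0 < ip x x)
    (e : Module.Basis (Fin 4) ℝ L)
    (horth : ∀ i j, ip (e i) (e j) = if i = j then 1 else 0)
    (lam : Fin 3 → ℝ)
    (h23 : ⁅e 2, e 3⁆ = lam 0 • e 1)
    (h31 : ⁅e 3, e 1⁆ = lam 1 • e 2)
    (h12 : ⁅e 1, e 2⁆ = lam 2 • e 3)
    (hne : lam 0 * lam 1 * lam 2 ≠ 0)
    (hsum : lam 0 + lam 1 + lam 2 = 0)
    (hideal : ∀ X : L, ∀ Y ∈ Submodule.span ℝ ({e 1, e 2, e 3} : Set L),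
      ⁅X, Y⁆ ∈ Submodule.span ℝ ({e 1, e 2, e 3} : Set L))
    (hselfadj : ∀ X ∈ Submodule.span ℝ ({e 1, e 2, e 3} : Set L),
      ∀ Y ∈ Submodule.span ℝ ({e 1, e 2, e 3} : Set L),
        ip ⁅e 0, X⁆ Y = ip X ⁅e 0, Y⁆) :
    (∀ X ∈ Submodule.span ℝ ({e 1, e 2, e 3} : Set L), ⁅e 0, X⁆ = 0) ∧
      (∀ X : L, LinearMap.trace ℝ L (LieAlgebra.ad ℝ L X) = 0) := by
  have hl : lam 0 ≠ 0 ∧ lam 1 ≠ 0 ∧ lam 2 ≠ 0 := by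
    refine ⟨fun h => hne ?_, fun h => hne ?_, fun h => hne ?_⟩ <;> rw [h] <;> ring
  obtain ⟨hl0, hl1, hl2⟩ := hl
  have he1 : e 1 ∈ Submodule.span ℝ ({e 1, e 2, e 3} : Set L) :=
    Submodule.subset_span (by simp)
  have he2 : e 2 ∈ Submodule.span ℝ ({e 1, e 2, e 3} : Set L) :=
    Submodule.subset_span (by simp)
  have he3 : e 3 ∈ Submodule.span ℝ ({e 1, e 2, e 3} : Set L) :=
    Submodule.subset_span (by simp)
  -- expansion of elements of u in the orthonormal basis
  have hexp : ∀ v ∈ Submodule.span ℝ ({e 1, e 2, e 3} : Set L),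
      v = ip (e 1) v • e 1 + ip (e 2) v • e 2 + ip (e 3) v • e 3 := by
    have hQ : Submodule.span ℝ ({e 1, e 2, e 3} : Set L) ≤ LinearMap.ker
        (LinearMap.id - ((ip (e 1)).smulRight (e 1) + (ip (e 2)).smulRight (e 2)
          + (ip (e 3)).smulRight (e 3))) := by
      rw [Submodule.span_le]
      intro x hx
      simp only [Set.mem_insert_iff, Set.mem_singleton_iff] at hx
      rcases hx with rfl | rfl | rfl <;>
        simp [LinearMap.mem_ker, LinearMap.sub_apply, horth]
    intro v hv
    have h := hQ hv
    simp only [LinearMap.mem_ker, LinearMap.sub_apply, LinearMap.id_apply,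
      LinearMap.add_apply, LinearMap.smulRight_apply, sub_eq_zero] at h
    exact h
  have hB1 := hexp _ (hideal (e 0) (e 1) he1)
  have hB2 := hexp _ (hideal (e 0) (e 2) he2)
  have hB3 := hexp _ (hideal (e 0) (e 3) he3)
  -- symmetry of the matrix of ad_{e0}
  have hs12 : ip (e 2) ⁅e 0, e 1⁆ = ip (e 1) ⁅e 0, e 2⁆ := by
    rw [← hselfadj (e 1) he1 (e 2) he2, hsymm]
  have hs13 : ip (e 3) ⁅e 0, e 1⁆ = ip (e 1) ⁅e 0, e 3⁆ := by
    rw [← hselfadj (e 1) he1 (e 3) he3, hsymm]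
  have hs23 : ip (e 3) ⁅e 0, e 2⁆ = ip (e 2) ⁅e 0, e 3⁆ := by
    rw [← hselfadj (e 2) he2 (e 3) he3, hsymm]
  -- remaining brackets
  have h32 : ⁅e 3, e 2⁆ = -lam 0 • e 1 := by rw [← lie_skew, h23, neg_smul]
  have h13 : ⁅e 1, e 3⁆ = -lam 1 • e 2 := by rw [← lie_skew, h31, neg_smul]
  have h21 : ⁅e 2, e 1⁆ = -lam 2 • e 3 := by rw [← lie_skew, h12, neg_smul]
  -- derivation identities
  have E1 : lam 0 • ⁅e 0, e 1⁆ = ⁅⁅e 0, e 2⁆, e 3⁆ + ⁅e 2, ⁅e 0, e 3⁆⁆ := by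
    rw [← lie_smul, ← h23]; exact leibniz_lie _ _ _
  have E2 : lam 1 • ⁅e 0, e 2⁆ = ⁅⁅e 0, e 3⁆, e 1⁆ + ⁅e 3, ⁅e 0, e 1⁆⁆ := by
    rw [← lie_smul, ← h31]; exact leibniz_lie _ _ _
  have E3 : lam 2 • ⁅e 0, e 3⁆ = ⁅⁅e 0, e 1⁆, e 2⁆ + ⁅e 1, ⁅e 0, e 2⁆⁆ := by
    rw [← lie_smul, ← h12]; exact leibniz_lie _ _ _
  rw [hB2, hB3] at E1
  rw [hB3, hB1] at E2
  rw [hB1, hB2] at E3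
  simp only [add_lie, lie_add, smul_lie, lie_smul, h23, h31, h12, h32, h13, h21,
    lie_self, smul_zero, zero_add, add_zero, smul_smul, smul_neg, neg_smul] at E1 E2 E3
  have F11 := congrArg (⇑(ip (e 1))) E1
  have F12 := congrArg (⇑(ip (e 2))) E1
  have F13 := congrArg (⇑(ip (e 3))) E1
  have F21 := congrArg (⇑(ip (e 1))) E2
  have F22 := congrArg (⇑(ip (e 2))) E2
  have F23 := congrArg (⇑(ip (e 3))) E2
  have F31 := congrArg (⇑(ip (e 1))) E3
  have F32 := congrArg (⇑(ip (e 2))) E3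
  have F33 := congrArg (⇑(ip (e 3))) E3
  simp only [map_add, map_smul, map_neg, horth, smul_eq_mul, mul_ite, mul_one, mul_zero,
    Fin.reduceEq, if_true, reduceIte, if_false, neg_neg, add_zero, zero_add, neg_zero, mul_neg] at F11 F12 F13 F21 F22 F23 F31 F32 F33
  -- off-diagonal entries vanish
  have za12 : ip (e 1) ⁅e 0, e 2⁆ = 0 := by
    have h : lam 2 * ip (e 1) ⁅e 0, e 2⁆ = 0 := by
      linear_combination (ip (e 1) ⁅e 0, e 2⁆) * hsum + lam 0 * hs12 - F12
    exact (mul_eq_zero.mp h).resolve_left hl2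
  have za13 : ip (e 1) ⁅e 0, e 3⁆ = 0 := by
    have h : lam 1 * ip (e 1) ⁅e 0, e 3⁆ = 0 := by
      linear_combination (ip (e 1) ⁅e 0, e 3⁆) * hsum + lam 0 * hs13 - F13
    exact (mul_eq_zero.mp h).resolve_left hl1
  have za23 : ip (e 2) ⁅e 0, e 3⁆ = 0 := by
    have h : lam 0 * ip (e 2) ⁅e 0, e 3⁆ = 0 := by
      linear_combination (ip (e 2) ⁅e 0, e 3⁆) * hsum + lam 1 * hs23 - F23
    exact (mul_eq_zero.mp h).resolve_left hl0
  -- diagonal entries vanish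
  have d1 : ip (e 1) ⁅e 0, e 1⁆ = ip (e 2) ⁅e 0, e 2⁆ + ip (e 3) ⁅e 0, e 3⁆ :=
    mul_left_cancel₀ hl0 (by linear_combination F11)
  have d2 : ip (e 2) ⁅e 0, e 2⁆ = ip (e 3) ⁅e 0, e 3⁆ + ip (e 1) ⁅e 0, e 1⁆ :=
    mul_left_cancel₀ hl1 (by linear_combination F22)
  have d3 : ip (e 3) ⁅e 0, e 3⁆ = ip (e 1) ⁅e 0, e 1⁆ + ip (e 2) ⁅e 0, e 2⁆ :=
    mul_left_cancel₀ hl2 (by linear_combination F33)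
  have za11 : ip (e 1) ⁅e 0, e 1⁆ = 0 := by linarith
  have za22 : ip (e 2) ⁅e 0, e 2⁆ = 0 := by linarith
  have za33 : ip (e 3) ⁅e 0, e 3⁆ = 0 := by linarith
  have hZ1 : ⁅e 0, e 1⁆ = 0 := by rw [hB1, za11, hs12, za12, hs13, za13]; simp
  have hZ2 : ⁅e 0, e 2⁆ = 0 := by rw [hB2, za12, za22, hs23, za23]; simp
  have hZ3 : ⁅e 0, e 3⁆ = 0 := by rw [hB3, za13, za23, za33]; simp
  have part1 : ∀ X ∈ Submodule.span ℝ ({e 1, e 2, e 3} : Set L), ⁅e 0, X⁆ = 0 := by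
    have hker : Submodule.span ℝ ({e 1, e 2, e 3} : Set L) ≤
        LinearMap.ker (LieAlgebra.ad ℝ L (e 0)) := by
      rw [Submodule.span_le]
      intro x hx
      simp only [Set.mem_insert_iff, Set.mem_singleton_iff] at hx
      rcases hx with rfl | rfl | rfl <;>
        simp [LinearMap.mem_ker, LieAlgebra.ad_apply, hZ1, hZ2, hZ3]
    intro X hX
    have h := hker hX
    simpa [LinearMap.mem_ker, LieAlgebra.ad_apply] using h
  refine ⟨part1, ?_⟩
  have h10 : ⁅e 1, e 0⁆ = 0 := by rw [← lie_skew, hZ1, neg_zero]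
  have h20 : ⁅e 2, e 0⁆ = 0 := by rw [← lie_skew, hZ2, neg_zero]
  have h30 : ⁅e 3, e 0⁆ = 0 := by rw [← lie_skew, hZ3, neg_zero]
  have htr : ∀ i : Fin 4, LinearMap.trace ℝ L (LieAlgebra.ad ℝ L (e i)) = 0 := by
    intro i
    rw [LinearMap.trace_eq_matrix_trace ℝ e, Matrix.trace, Fin.sum_univ_four]
    simp only [Matrix.diag_apply, LinearMap.toMatrix_apply, LieAlgebra.ad_apply]
    fin_cases i <;>
      simp [Fin.isValue, hZ1, hZ2, hZ3, h10, h20, h30, h23, h31, h12, h32, h13, h21,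
        lie_self, Module.Basis.repr_self, Finsupp.single_apply, Finsupp.smul_apply, map_smul]
  intro X
  letI : LieRing (Module.End ℝ L) := LieRing.ofAssociativeRing
  letI : LieAlgebra ℝ (Module.End ℝ L) := LieAlgebra.ofAssociativeAlgebra
  have hT : (LinearMap.trace ℝ L).comp (LieAlgebra.ad ℝ L).toLinearMap = 0 := by
    apply Module.Basis.ext e
    intro i
    simp only [LinearMap.comp_apply, LieHom.coe_toLinearMap, LinearMap.zero_apply]
    exact htr i
  have hX := LinearMap.congr_fun hT X
  simpa using hX
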